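/- Let m, n be positive integers and let G = C_m ⊕ C_{mn}. Then the Davenport constant satisfies D(G) = m + mn − 1; that is, every sequence over G of length at least m + mn − 1 has a nonempty zero-sum subsequence, and there exists a sequence over G of length m + mn − 2 with no nonempty zero-sum subsequence. -/

import Mathlib

open Multiset

/-- Preimage of a sub-multiset under map. -/
lemma exists_le_of_le_map {α β : Type*} {f : α → β} :
    ∀ {V : Multiset β} {S : Multiset α}, V ≤ S.map f → ∃ B ≤ S, B.map f = V := by
  classical
  intro V
  induction V using Multiset.induction with
  | empty => exact fun _ => ⟨0, Multiset.zero_le _, rfl⟩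
  | cons v V ih =>
    intro S h
    have hv : v ∈ S.map f := mem_of_le h (mem_cons_self v V)
    obtain ⟨s, hs, rfl⟩ := Multiset.mem_map.mp hv
    have hS : S.map f = f s ::ₘ (S.erase s).map f := by
      conv_lhs => rw [← Multiset.cons_erase hs]
      rw [Multiset.map_cons]
    have hV : V ≤ (S.erase s).map f := by
      have := Multiset.erase_le_erase (f s) h
      rwa [Multiset.erase_cons_head, hS, Multiset.erase_cons_head] at this
    obtain ⟨B, hB, rfl⟩ := ih hV
    exact ⟨s ::ₘ B, by
      conv_rhs => rw [← Multiset.cons_erase hs]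
      exact Multiset.cons_le_cons s hB, by rw [Multiset.map_cons]⟩

lemma msum_sum {G : Type*} [AddCommMonoid G] (N : Multiset (Multiset G)) :
    N.sum.sum = (N.map Multiset.sum).sum := by
  induction N using Multiset.induction with
  | empty => simp
  | cons B N ih => simp [Multiset.sum_cons, ih]

lemma sum_le_sum_of_le {G : Type*} [AddCommMonoid G] {N M : Multiset (Multiset G)}
    (h : N ≤ M) : N.sum ≤ M.sum := by
  obtain ⟨R, rfl⟩ := Multiset.le_iff_exists_add.mp h
  simp only [Multiset.sum_add]
  exact le_add_right _ _

lemma card_sum_le {G : Type*} {N : Multiset (Multiset G)} {a : ℕ}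
    (h : ∀ B ∈ N, Multiset.card B ≤ a) : Multiset.card N.sum ≤ Multiset.card N * a := by
  induction N using Multiset.induction with
  | empty => simp
  | cons B N ih =>
    simp only [Multiset.sum_cons, Multiset.card_add, Multiset.card_cons]
    have h1 := h B (mem_cons_self _ _)
    have h2 := ih (fun B hB => h B (mem_cons_of_mem hB))
    calc Multiset.card B + Multiset.card N.sum ≤ a + Multiset.card N * a := by omega
    _ = (Multiset.card N + 1) * a := by ring

/-- `D(G) ≤ d` as a property. -/
def ZSle (G : Type*) [AddCommMonoid G] (d : ℕ) : Prop :=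
  ∀ S : Multiset G, d ≤ Multiset.card S → ∃ T ≤ S, T ≠ 0 ∧ T.sum = 0

/-- `η(G) ≤ e` with short zero-sums of length `≤ a`. -/
def ZSshort (G : Type*) [AddCommMonoid G] (e a : ℕ) : Prop :=
  ∀ S : Multiset G, e ≤ Multiset.card S →
    ∃ T ≤ S, T ≠ 0 ∧ T.sum = 0 ∧ Multiset.card T ≤ a

/-- Extraction of `k` disjoint blocks, each nonempty of size `≤ a`, whose sums come
from `K` via `φ`. -/
lemma extract_blocks {G Q K : Type*} [AddCommGroup G] [AddCommMonoid Q] [AddCommMonoid K]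
    (f : G →+ Q) (φ : K →+ G) (hker : ∀ x : G, f x = 0 → ∃ y, φ y = x)
    {e a : ℕ} (hQ : ZSshort Q e a) :
    ∀ (k : ℕ) (S : Multiset G), e + a * k ≤ Multiset.card S + a →
    ∃ M : Multiset (Multiset G × K), Multiset.card M = k ∧ (M.map Prod.fst).sum ≤ S ∧
      ∀ p ∈ M, p.1 ≠ 0 ∧ Multiset.card p.1 ≤ a ∧ φ p.2 = p.1.sum := by
  classical
  intro k
  induction k with
  | zero => exact fun S _ => ⟨0, rfl, by simp, by simp⟩
  | succ k ih =>
    intro S hS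
    have hcard : e ≤ Multiset.card S := by
      have : e + a * k ≤ Multiset.card S := by
        have := hS; rw [Nat.mul_succ] at this; omega
      omega
    obtain ⟨V, hVle, hVne, hVsum, hVcard⟩ := hQ (S.map f) (by simpa using hcard)
    obtain ⟨B, hBle, hBmap⟩ := exists_le_of_le_map hVle
    have hBne : B ≠ 0 := by rintro rfl; simp at hBmap; exact hVne hBmap.symm
    have hBcard : Multiset.card B ≤ a := by
      have hh : Multiset.card B = Multiset.card V := by
        simpa using congrArg Multiset.card hBmap
      omega
    have hBsum : f B.sum = 0 := by rw [map_multiset_sum, hBmap, hVsum]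
    obtain ⟨y, hy⟩ := hker _ hBsum
    have hcards : Multiset.card (S - B) = Multiset.card S - Multiset.card B :=
      Multiset.card_sub hBle
    obtain ⟨M, hMcard, hMle, hMprop⟩ := ih (S - B) (by
      rw [hcards]
      have := hS; rw [Nat.mul_succ] at this
      have hB2 : Multiset.card B ≤ Multiset.card S := Multiset.card_le_card hBle
      omega)
    refine ⟨(B, y) ::ₘ M, by simp [hMcard], ?_, ?_⟩
    · rw [Multiset.map_cons, Multiset.sum_cons]
      calc B + (M.map Prod.fst).sum ≤ B + (S - B) := add_le_add_right hMle B
      _ = S := by rw [add_comm]; exact tsub_add_cancel_of_le hBle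
    · intro p hp
      rcases Multiset.mem_cons.mp hp with h | h
      · subst h; exact ⟨hBne, hBcard, hy⟩
      · exact hMprop p h

/-- Combine selected blocks into one zero-sum sub-multiset. -/
lemma combine_blocks {G K : Type*} [AddCommMonoid G] [AddCommMonoid K]
    (φ : K →+ G) {N : Multiset (Multiset G × K)}
    (hne : N ≠ 0) (hsum : φ (N.map Prod.snd).sum = 0)
    (hprop : ∀ p ∈ N, p.1 ≠ 0 ∧ φ p.2 = p.1.sum) :
    (N.map Prod.fst).sum ≠ 0 ∧ ((N.map Prod.fst).sum).sum = 0 := by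
  constructor
  · obtain ⟨p, hp⟩ := Multiset.exists_mem_of_ne_zero hne
    have h1 : p.1 ∈ N.map Prod.fst := Multiset.mem_map_of_mem _ hp
    have h2 : p.1 ≤ (N.map Prod.fst).sum :=
      Multiset.single_le_sum (fun x _ => Multiset.zero_le x) _ h1
    intro h0
    rw [h0] at h2
    exact (hprop p hp).1 (Multiset.le_zero.mp h2)
  · rw [msum_sum, Multiset.map_map]
    have h1 : (N.map fun p => p.1.sum) = N.map fun p => φ p.2 :=
      Multiset.map_congr rfl (fun p hp => ((hprop p hp).2).symm)
    have h2 : (N.map fun p => φ p.2).sum = φ (N.map Prod.snd).sum := by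
      rw [map_multiset_sum, Multiset.map_map]; rfl
    rw [Function.comp_def, h1, h2]
    exact hsum

/-- Main inductive step, `D`-version: `k` short blocks plus one final block. -/
lemma ZSle_tower {G Q K : Type*} [AddCommGroup G] [AddCommMonoid Q] [AddCommMonoid K]
    (f : G →+ Q) (φ : K →+ G) (hker : ∀ x : G, f x = 0 → ∃ y, φ y = x)
    {e a eD k t : ℕ} (hQ : ZSshort Q e a) (hQD : ZSle Q eD) (heD : e ≤ eD + a)
    (hK : ZSle K (k + 1)) (ht : k * a + eD ≤ t) : ZSle G t := by
  classical
  intro S hS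
  have hcard : k * a + eD ≤ Multiset.card S := le_trans ht hS
  obtain ⟨M, hMcard, hMle, hMprop⟩ := extract_blocks f φ hker hQ k S (by
    have : e + a * k ≤ (k * a + eD) + a := by rw [mul_comm]; omega
    omega)
  set S' := S - (M.map Prod.fst).sum with hS'def
  have hA : Multiset.card ((M.map Prod.fst).sum) ≤ k * a := by
    have := card_sum_le (N := M.map Prod.fst) (a := a) (by
      intro B hB
      obtain ⟨p, hp, rfl⟩ := Multiset.mem_map.mp hB
      exact (hMprop p hp).2.1)
    simpa [hMcard] using this
  have hS'card : eD ≤ Multiset.card S' := by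
    have h1 : Multiset.card S' = Multiset.card S - Multiset.card ((M.map Prod.fst).sum) :=
      Multiset.card_sub hMle
    omega
  obtain ⟨V, hVle, hVne, hVsum⟩ := hQD (S'.map f) (by simpa using hS'card)
  obtain ⟨B, hBle, hBmap⟩ := exists_le_of_le_map hVle
  have hBne : B ≠ 0 := by rintro rfl; simp at hBmap; exact hVne hBmap.symm
  have hBsum : f B.sum = 0 := by rw [map_multiset_sum, hBmap, hVsum]
  obtain ⟨y, hy⟩ := hker _ hBsum
  set M' : Multiset (Multiset G × K) := (B, y) ::ₘ M with hM'def
  have hM'le : (M'.map Prod.fst).sum ≤ S := by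
    rw [hM'def, Multiset.map_cons, Multiset.sum_cons]
    calc B + (M.map Prod.fst).sum ≤ S' + (M.map Prod.fst).sum := add_le_add_left hBle _
    _ = S := by rw [hS'def]; exact tsub_add_cancel_of_le hMle
  obtain ⟨W, hWle, hWne, hWsum⟩ := hK (M'.map Prod.snd) (by simp [hM'def, hMcard])
  obtain ⟨N, hNle, hNmap⟩ := exists_le_of_le_map hWle
  have hNne : N ≠ 0 := by rintro rfl; simp at hNmap; exact hWne hNmap.symm
  have hprop : ∀ p ∈ N, p.1 ≠ 0 ∧ φ p.2 = p.1.sum := by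
    intro p hp
    have hpM' : p ∈ M' := Multiset.mem_of_le hNle hp
    rcases Multiset.mem_cons.mp hpM' with h | h
    · subst h; exact ⟨hBne, hy⟩
    · exact ⟨(hMprop p h).1, (hMprop p h).2.2⟩
  obtain ⟨hTne, hTsum⟩ := combine_blocks φ hNne
    (by rw [hNmap, hWsum]; exact map_zero φ) hprop
  exact ⟨(N.map Prod.fst).sum,
    le_trans (sum_le_sum_of_le (Multiset.map_le_map hNle)) hM'le, hTne, hTsum⟩

/-- Main inductive step, `η`-version: all blocks short. -/
lemma ZSshort_tower {G Q K : Type*} [AddCommGroup G] [AddCommMonoid Q] [AddCommMonoid K]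
    (f : G →+ Q) (φ : K →+ G) (hker : ∀ x : G, f x = 0 → ∃ y, φ y = x)
    {e a k c t : ℕ} (hQ : ZSshort Q e a)
    (hK : ZSshort K k c) (ht : e + a * k ≤ t + a) : ZSshort G t (a * c) := by
  intro S hS
  obtain ⟨M, hMcard, hMle, hMprop⟩ := extract_blocks f φ hker hQ k S (by omega)
  obtain ⟨W, hWle, hWne, hWsum, hWcard⟩ := hK (M.map Prod.snd) (by simp [hMcard])
  obtain ⟨N, hNle, hNmap⟩ := exists_le_of_le_map hWle
  have hNne : N ≠ 0 := by rintro rfl; simp at hNmap; exact hWne hNmap.symm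
  obtain ⟨hTne, hTsum⟩ := combine_blocks φ hNne
    (by rw [hNmap, hWsum]; exact map_zero φ)
    (fun p hp => ⟨(hMprop p (Multiset.mem_of_le hNle hp)).1,
      (hMprop p (Multiset.mem_of_le hNle hp)).2.2⟩)
  refine ⟨(N.map Prod.fst).sum,
    le_trans (sum_le_sum_of_le (Multiset.map_le_map hNle)) hMle, hTne, hTsum, ?_⟩
  have hcard : Multiset.card ((N.map Prod.fst).sum) ≤ Multiset.card N * a := by
    have h := card_sum_le (N := N.map Prod.fst) (a := a) (by
      intro B hB
      obtain ⟨p, hp, rfl⟩ := Multiset.mem_map.mp hB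
      exact (hMprop p (Multiset.mem_of_le hNle hp)).2.1)
    simpa using h
  have hNcard : Multiset.card N = Multiset.card W := by
    simpa using congrArg Multiset.card hNmap
  calc Multiset.card ((N.map Prod.fst).sum) ≤ Multiset.card N * a := hcard
  _ ≤ c * a := by rw [hNcard]; exact Nat.mul_le_mul_right a hWcard
  _ = a * c := mul_comm c a

/-- `D(C_n) ≤ n` by pigeonhole on prefix sums. -/
lemma zsle_zmod (n : ℕ) (hn : 0 < n) : ZSle (ZMod n) n := by
  haveI : NeZero n := ⟨hn.ne'⟩
  intro S hS
  obtain ⟨l, rfl⟩ : ∃ l : List (ZMod n), (l : Multiset (ZMod n)) = S :=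
    ⟨S.toList, S.coe_toList⟩
  have hlen : n ≤ l.length := by simpa using hS
  have hcards : Fintype.card (ZMod n) < Fintype.card (Fin (n + 1)) := by
    simp [ZMod.card]
  obtain ⟨i, j, hij, hg⟩ := Fintype.exists_ne_map_eq_of_card_lt
    (fun i : Fin (n + 1) => ((l.take (i : ℕ)).sum : ZMod n)) hcards
  wlog hlt : (i : ℕ) < (j : ℕ) generalizing i j
  · have hne : (i : ℕ) ≠ (j : ℕ) := fun h => hij (Fin.ext h)
    exact this j i hij.symm hg.symm (by omega)
  set T : List (ZMod n) := (l.drop (i : ℕ)).take ((j : ℕ) - (i : ℕ)) with hT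
  have hinfix : T <:+: l := by
    have h1 : T <+: l.drop (i : ℕ) := List.take_prefix _ _
    have h2 : l.drop (i : ℕ) <:+ l := List.drop_suffix _ _
    exact h1.isInfix.trans h2.isInfix
  refine ⟨(T : Multiset (ZMod n)), Multiset.coe_le.mpr hinfix.sublist.subperm, ?_, ?_⟩
  · have hjle : (j : ℕ) ≤ l.length := le_trans (by omega) hlen
    have : T.length = (j : ℕ) - (i : ℕ) := by
      rw [hT, List.length_take, List.length_drop]
      omega
    intro h0
    have : T.length = 0 := by
      simpa using congrArg Multiset.card (h0 : (T : Multiset (ZMod n)) = 0)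
    omega
  · have hsplit : l.take (j : ℕ) = l.take (i : ℕ) ++ T := by
      rw [hT, ← List.take_add]
      congr 1
      omega
    have := congrArg List.sum hsplit
    rw [List.sum_append] at this
    have hsum : (l.take (i : ℕ)).sum = (l.take (i : ℕ)).sum + T.sum := by
      rw [← this, hg]
    have hzero : T.sum = 0 := left_eq_add.mp hsum
    simpa using hzero

open MvPolynomial in
/-- Chevalley–Warning: a nonempty subset on which all coefficient vectors sum to zero. -/
lemma chev_subset {p : ℕ} [hp : Fact p.Prime] {N r : ℕ} (c : Fin N → Fin r → ZMod p)
    (hd : r * (p - 1) < N) :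
    ∃ A : Finset (Fin N), A.Nonempty ∧ ∀ j, ∑ i ∈ A, c i j = 0 := by
  classical
  set f : Fin r → MvPolynomial (Fin N) (ZMod p) :=
    fun j => ∑ i, MvPolynomial.C (c i j) * (MvPolynomial.X i) ^ (p - 1) with hf
  have hdeg : ∀ j, (f j).totalDegree ≤ p - 1 := by
    intro j
    refine le_trans (totalDegree_finset_sum _ _) (Finset.sup_le fun i _ => ?_)
    calc (MvPolynomial.C (c i j) * MvPolynomial.X i ^ (p - 1)).totalDegree
        ≤ (MvPolynomial.C (c i j)).totalDegree + (MvPolynomial.X (R := ZMod p) i ^ (p - 1)).totalDegree :=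
          totalDegree_mul _ _
    _ ≤ 0 + (p - 1) := by
        gcongr
        · exact le_of_eq (totalDegree_C _)
        · exact (totalDegree_pow _ _).trans (by simp [totalDegree_X])
    _ = p - 1 := zero_add _
  have hsum : (∑ j, (f j).totalDegree) < Fintype.card (Fin N) := by
    calc (∑ j, (f j).totalDegree) ≤ ∑ _j : Fin r, (p - 1) := Finset.sum_le_sum fun j _ => hdeg j
    _ = r * (p - 1) := by simp [Finset.sum_const, mul_comm]
    _ < N := hd
    _ = Fintype.card (Fin N) := (Fintype.card_fin N).symm
  have hdvd := char_dvd_card_solutions_of_fintype_sum_lt p hsum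
  have heval : ∀ (x : Fin N → ZMod p) (j), eval x (f j) = ∑ i, c i j * x i ^ (p - 1) := by
    intro x j
    rw [hf]
    simp [eval_sum]
  have hppos : 0 < p - 1 := by have := hp.out.two_le; omega
  have hzero : ∀ j, eval (fun _ => (0 : ZMod p)) (f j) = 0 := by
    intro j
    rw [heval]
    simp [zero_pow hppos.ne']
  have hdvd' : p ∣ Fintype.card { x : Fin N → ZMod p // ∀ j, eval x (f j) = 0 } := by
    convert hdvd using 2
  have hpos : 0 < Fintype.card { x : Fin N → ZMod p // ∀ j, eval x (f j) = 0 } :=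
    Fintype.card_pos_iff.mpr ⟨⟨fun _ => 0, hzero⟩⟩
  have hone : 1 < Fintype.card { x : Fin N → ZMod p // ∀ j, eval x (f j) = 0 } :=
    lt_of_lt_of_le hp.out.one_lt (Nat.le_of_dvd hpos hdvd')
  obtain ⟨x, y, hxy⟩ := Fintype.exists_pair_of_one_lt_card hone
  have hx : ∃ z : { x : Fin N → ZMod p // ∀ j, eval x (f j) = 0 }, z.val ≠ fun _ => 0 := by
    by_contra h
    push_neg at h
    exact hxy (Subtype.ext ((h x).trans (h y).symm))
  obtain ⟨⟨x, hxsol⟩, hxne⟩ := hx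
  have hxex : ∃ i, x i ≠ 0 := by
    by_contra h
    push_neg at h
    exact hxne (funext h)
  refine ⟨Finset.univ.filter (fun i => x i ≠ 0), ?_, ?_⟩
  · obtain ⟨i, hi⟩ := hxex
    exact ⟨i, Finset.mem_filter.mpr ⟨Finset.mem_univ i, hi⟩⟩
  · intro j
    have h0 := hxsol j
    rw [heval] at h0
    have hsum2 : ∑ i ∈ Finset.univ.filter (fun i => x i ≠ 0), c i j
        = ∑ i, c i j * x i ^ (p - 1) := by
      rw [Finset.sum_filter]
      refine Finset.sum_congr rfl fun i _ => ?_
      by_cases hxi : x i = 0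
      · simp [hxi, zero_pow hppos.ne']
      · simp [hxi, ZMod.pow_card_sub_one_eq_one hxi]
    rw [hsum2, h0]

lemma list_part_le {α : Type*} (l : List α) (A : Finset (Fin l.length)) :
    (A.val.map l.get) ≤ (l : Multiset α) := by
  have h1 : A.val ≤ (Finset.univ : Finset (Fin l.length)).val :=
    Finset.val_le_iff.mpr (Finset.subset_univ A)
  have h2 : ((Finset.univ : Finset (Fin l.length)).val).map l.get = (l : Multiset α) := by
    rw [Fin.univ_def]
    show Multiset.map l.get (↑(List.finRange l.length)) = _
    rw [Multiset.map_coe, List.map_get_finRange]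
  calc (A.val.map l.get) ≤ ((Finset.univ : Finset (Fin l.length)).val).map l.get :=
        Multiset.map_le_map h1
  _ = _ := h2

lemma take_le_self {α : Type*} (S : Multiset α) (k : ℕ) :
    ((S.toList.take k : List α) : Multiset α) ≤ S := by
  conv_rhs => rw [← S.coe_toList]
  exact Multiset.coe_le.mpr (List.take_prefix k S.toList).sublist.subperm

lemma ZSle_of_short {G : Type*} [AddCommMonoid G] {e a : ℕ} (h : ZSshort G e a) :
    ZSle G e := fun S hS => by
  obtain ⟨T, h1, h2, h3, _⟩ := h S hS
  exact ⟨T, h1, h2, h3⟩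

/-- `D((C_p)²) ≤ 2p-1`, with the zero-sum of size `≤ 2p-1`. -/
lemma chev_D2 (p : ℕ) [hp : Fact p.Prime] :
    ZSshort (ZMod p × ZMod p) (2 * p - 1) (2 * p - 1) := by
  intro S hS
  set l : List (ZMod p × ZMod p) := S.toList.take (2 * p - 1) with hl
  have hlS : (l : Multiset (ZMod p × ZMod p)) ≤ S := take_le_self S _
  have hlen : l.length = 2 * p - 1 := by
    rw [hl, List.length_take]
    have : Multiset.card S = S.toList.length := by
      rw [← S.coe_toList]; simp
    omega
  have hp2 := hp.out.two_le
  obtain ⟨A, hAne, hA⟩ := chev_subset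
    (fun (i : Fin l.length) => ![(l.get i).1, (l.get i).2])
    (r := 2) (by omega)
  have hcardT : Multiset.card (A.val.map l.get) = A.card := by simp
  refine ⟨A.val.map l.get, le_trans (list_part_le l A) hlS, ?_, ?_, ?_⟩
  · rw [Ne, ← Multiset.card_eq_zero, hcardT]
    have := Finset.card_pos.mpr hAne
    omega
  · have h0 := hA 0
    have h1 := hA 1
    simp only [Matrix.cons_val_zero, Matrix.cons_val_one, Matrix.head_cons] at h0 h1
    have hsum_eq : (A.val.map l.get).sum = ∑ i ∈ A, l.get i := rfl
    rw [hsum_eq]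
    exact Prod.ext (by simpa [Prod.fst_sum] using h0) (by simpa [Prod.snd_sum] using h1)
  · rw [hcardT]
    calc A.card ≤ Fintype.card (Fin l.length) := Finset.card_le_univ A
    _ = 2 * p - 1 := by simp [hlen]

/-- `η((C_p)²) ≤ 3p-2` with short zero-sums of length `≤ p`. -/
lemma chev_eta (p : ℕ) [hp : Fact p.Prime] :
    ZSshort (ZMod p × ZMod p) (3 * p - 2) p := by
  classical
  intro S hS
  set l : List (ZMod p × ZMod p) := S.toList.take (3 * p - 2) with hl
  have hlS : (l : Multiset (ZMod p × ZMod p)) ≤ S := take_le_self S _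
  have hlen : l.length = 3 * p - 2 := by
    rw [hl, List.length_take]
    have : Multiset.card S = S.toList.length := by
      rw [← S.coe_toList]; simp
    omega
  have hp2 := hp.out.two_le
  obtain ⟨A, hAne, hA⟩ := chev_subset
    (fun (i : Fin l.length) => ![1, (l.get i).1, (l.get i).2])
    (r := 3) (by omega)
  set T : Multiset (ZMod p × ZMod p) := A.val.map l.get with hT
  have hTle : T ≤ S := le_trans (list_part_le l A) hlS
  have hTcard : Multiset.card T = A.card := by simp [hT]
  have hTne : T ≠ 0 := by
    rw [Ne, ← Multiset.card_eq_zero, hTcard]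
    have := Finset.card_pos.mpr hAne
    omega
  have hTsum : T.sum = 0 := by
    have h1 := hA 1
    have h2 := hA 2
    simp only [Matrix.cons_val_zero, Matrix.cons_val_one, Matrix.head_cons,
      Matrix.cons_val_two, Matrix.tail_cons] at h1 h2
    have hsum_eq : T.sum = ∑ i ∈ A, l.get i := rfl
    rw [hsum_eq]
    exact Prod.ext (by simpa [Prod.fst_sum] using h1) (by simpa [Prod.snd_sum] using h2)
  have hdvd : p ∣ A.card := by
    have h0 := hA 0
    simp only [Matrix.cons_val_zero] at h0
    rw [Finset.sum_const, nsmul_eq_mul, mul_one] at h0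
    exact (ZMod.natCast_eq_zero_iff _ _).mp h0
  have hAcard_le : A.card ≤ 3 * p - 2 := by
    calc A.card ≤ Fintype.card (Fin l.length) := Finset.card_le_univ A
    _ = 3 * p - 2 := by simp [hlen]
  by_cases hsmall : A.card ≤ p
  · exact ⟨T, hTle, hTne, hTsum, by omega⟩
  · -- A.card = 2p
    have hA2p : A.card = 2 * p := by
      obtain ⟨k, hk⟩ := hdvd
      have hApos := Finset.card_pos.mpr hAne
      have hk2 : k = 2 := by
        rcases Nat.lt_or_ge k 2 with h | h
        · interval_cases k <;> omega
        · rcases Nat.lt_or_ge k 3 with h3 | h3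
          · omega
          · exfalso
            have h3p : 3 * p ≤ p * k := by
              calc 3 * p = p * 3 := by ring
              _ ≤ p * k := Nat.mul_le_mul_left p h3
            omega
      subst hk2
      omega
    obtain ⟨T', hT'le, hT'ne, hT'sum, hT'card⟩ := chev_D2 p T (by rw [hTcard]; omega)
    by_cases h' : Multiset.card T' ≤ p
    · exact ⟨T', le_trans hT'le hTle, hT'ne, hT'sum, h'⟩
    · refine ⟨T - T', le_trans (Multiset.sub_le_self _ _) hTle, ?_, ?_, ?_⟩
      · rw [Ne, ← Multiset.card_eq_zero, Multiset.card_sub hT'le]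
        omega
      · have hsplit : (T - T') + T' = T := tsub_add_cancel_of_le hT'le
        have hss := congrArg Multiset.sum hsplit
        rw [Multiset.sum_add, hT'sum, add_zero] at hss
        rw [hss, hTsum]
      · rw [Multiset.card_sub hT'le]
        omega

/-- The additive map `ZMod b →+ ZMod (a*b)` sending `1` to `a`. -/
noncomputable def mulZMod (a b : ℕ) : ZMod b →+ ZMod (a * b) :=
  ZMod.lift b ⟨zmultiplesHom (ZMod (a * b)) (a : ZMod (a * b)), by
    simp only [zmultiplesHom_apply]
    have h : ((b : ℤ) • (a : ZMod (a * b))) = ((b * a : ℕ) : ZMod (a * b)) := by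
      rw [zsmul_eq_mul]
      push_cast
      ring
    rw [h, mul_comm, ZMod.natCast_self]⟩

lemma mulZMod_natCast (a b : ℕ) (w : ℕ) :
    mulZMod a b (w : ZMod b) = ((a * w : ℕ) : ZMod (a * b)) := by
  have h1 : ((w : ℕ) : ZMod b) = ((w : ℤ) : ZMod b) := by push_cast; rfl
  rw [mulZMod, h1, ZMod.lift_coe]
  simp only [zmultiplesHom_apply]
  rw [zsmul_eq_mul]
  push_cast
  ring

/-- Anything killed by the cast `ZMod (a*b) → ZMod a` is in the image of `mulZMod`. -/
lemma mulZMod_ker {a b : ℕ} (ha : 0 < a) (hb : 0 < b) (x : ZMod (a * b))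
    (hx : ZMod.castHom (dvd_mul_right a b) (ZMod a) x = 0) : ∃ y, mulZMod a b y = x := by
  haveI : NeZero (a * b) := ⟨(Nat.mul_pos ha hb).ne'⟩
  obtain ⟨v, rfl⟩ := ZMod.natCast_zmod_surjective x
  rw [map_natCast] at hx
  obtain ⟨w, rfl⟩ := (ZMod.natCast_eq_zero_iff v a).mp hx
  exact ⟨(w : ZMod b), by rw [mulZMod_natCast]⟩

lemma zs_trivial {G : Type*} [AddCommMonoid G] [Subsingleton G] : ZSshort G 1 1 := by
  intro S hS
  have hSne : S ≠ 0 := by rintro rfl; simp at hS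
  obtain ⟨x, hx⟩ := Multiset.exists_mem_of_ne_zero hSne
  refine ⟨{x}, Multiset.singleton_le.mpr hx, by simp, ?_, by simp⟩
  simp [Multiset.sum_singleton, Subsingleton.elim x 0]

/-- Olson: `D((C_m)²) ≤ 2m-1` and `η((C_m)²) ≤ 3m-2` with short zero-sums. -/
lemma squares : ∀ m : ℕ, 0 < m →
    ZSle (ZMod m × ZMod m) (2 * m - 1) ∧ ZSshort (ZMod m × ZMod m) (3 * m - 2) m := by
  intro m
  induction m using Nat.strong_induction_on with
  | _ m ih =>
  intro hm
  rcases eq_or_lt_of_le (show 1 ≤ m from hm) with h1 | h2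
  · -- m = 1
    have : m = 1 := h1.symm
    subst this
    exact ⟨ZSle_of_short zs_trivial, zs_trivial⟩
  by_cases hprime : m.Prime
  · haveI : Fact m.Prime := ⟨hprime⟩
    exact ⟨ZSle_of_short (chev_D2 m), chev_eta m⟩
  · -- composite
    obtain ⟨p, b, hpp, hb1, hbm, hpm, rfl⟩ :
        ∃ p b, p.Prime ∧ 1 < b ∧ b < m ∧ p < m ∧ m = p * b := by
      refine ⟨m.minFac, m / m.minFac, Nat.minFac_prime (by omega), ?_, ?_, ?_, ?_⟩
      · -- 1 < m / minFac
        rcases Nat.lt_or_ge 1 (m / m.minFac) with h | h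
        · exact h
        · exfalso
          have hdvd := Nat.minFac_dvd m
          have hmf := Nat.div_mul_cancel hdvd
          have h2le := (Nat.minFac_prime (show m ≠ 1 by omega)).two_le
          have h0 : m / m.minFac = 0 ∨ m / m.minFac = 1 :=
            Nat.le_one_iff_eq_zero_or_eq_one.mp h
          rcases h0 with h0 | h0 <;> rw [h0] at hmf
          · omega
          · rw [one_mul] at hmf
            exact hprime (hmf ▸ Nat.minFac_prime (by omega))
      · exact Nat.div_lt_self (by omega) (Nat.minFac_prime (by omega)).one_lt
      · rcases Nat.lt_or_ge m.minFac m with h | h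
        · exact h
        · exfalso
          have := Nat.minFac_le (by omega : 0 < m)
          have heq : m.minFac = m := by omega
          exact hprime (heq ▸ Nat.minFac_prime (by omega))
      · exact (Nat.mul_div_cancel' (Nat.minFac_dvd m)).symm
    haveI : Fact p.Prime := ⟨hpp⟩
    have hp1 : 0 < p := hpp.pos
    have hb0 : 0 < b := by omega
    obtain ⟨Dp, Hp⟩ := ih p hpm hp1
    obtain ⟨Db, Hb⟩ := ih b hbm hb0
    -- homs
    set c : ZMod (p * b) →+ ZMod p :=
      (ZMod.castHom (dvd_mul_right p b) (ZMod p)).toAddMonoidHom with hc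
    set f : ZMod (p * b) × ZMod (p * b) →+ ZMod p × ZMod p := c.prodMap c with hfdef
    set φ : ZMod b × ZMod b →+ ZMod (p * b) × ZMod (p * b) :=
      (mulZMod p b).prodMap (mulZMod p b) with hφdef
    have hker : ∀ x : ZMod (p * b) × ZMod (p * b), f x = 0 → ∃ y, φ y = x := by
      rintro ⟨x1, x2⟩ hx
      rw [Prod.ext_iff] at hx
      obtain ⟨y1, hy1⟩ := mulZMod_ker hp1 hb0 x1 hx.1
      obtain ⟨y2, hy2⟩ := mulZMod_ker hp1 hb0 x2 hx.2
      exact ⟨(y1, y2), by simp [hφdef, Prod.ext_iff, hy1, hy2]⟩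
    have hple : p ≤ p * b := Nat.le_mul_of_pos_right p hb0
    constructor
    · -- D part
      have hK : ZSle (ZMod b × ZMod b) ((2 * b - 2) + 1) := by
        have h : 2 * b - 2 + 1 = 2 * b - 1 := by omega
        rw [h]; exact Db
      refine ZSle_tower f φ hker Hp Dp (by omega) hK ?_
      have h1 : (2 * b - 2) * p = 2 * (p * b) - 2 * p := by
        rw [Nat.sub_mul]
        congr 1 <;> ring
      rw [h1]
      omega
    · -- η part
      have hres := ZSshort_tower f φ hker Hp Hb (t := 3 * (p * b) - 2) ?_
      · exact hres
      · have h1 : p * (3 * b - 2) = 3 * (p * b) - 2 * p := by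
          rw [Nat.mul_sub]
          congr 1 <;> ring
        rw [h1]
        omega

/-- Upper bound: `D(C_m ⊕ C_mn) ≤ m + mn - 1`. -/
lemma dav_upper (m n : ℕ) (hm : 0 < m) (hn : 0 < n) :
    ZSle (ZMod m × ZMod (m * n)) (m + m * n - 1) := by
  obtain ⟨Dm, Hm⟩ := squares m hm
  set c : ZMod (m * n) →+ ZMod m :=
    (ZMod.castHom (dvd_mul_right m n) (ZMod m)).toAddMonoidHom with hc
  set f : ZMod m × ZMod (m * n) →+ ZMod m × ZMod m :=
    (AddMonoidHom.id (ZMod m)).prodMap c with hfdef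
  set φ : ZMod n →+ ZMod m × ZMod (m * n) :=
    (AddMonoidHom.inr (ZMod m) (ZMod (m * n))).comp (mulZMod m n) with hφdef
  have hker : ∀ x : ZMod m × ZMod (m * n), f x = 0 → ∃ y, φ y = x := by
    rintro ⟨x1, x2⟩ hx
    rw [Prod.ext_iff] at hx
    obtain ⟨hx1, hx2⟩ := hx
    obtain ⟨y, hy⟩ := mulZMod_ker hm hn x2 hx2
    refine ⟨y, ?_⟩
    have hx1' : x1 = 0 := hx1
    simp [hφdef, Prod.ext_iff, hy, hx1']
  have hK : ZSle (ZMod n) ((n - 1) + 1) := by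
    have h : n - 1 + 1 = n := by omega
    rw [h]; exact zsle_zmod n hn
  refine ZSle_tower f φ hker Hm Dm (by omega) hK ?_
  have h1 : (n - 1) * m = m * n - m := by
    rw [Nat.sub_mul]
    congr 1 <;> ring
  rw [h1]
  have h2 : m ≤ m * n := Nat.le_mul_of_pos_right m hn
  omega

/-- Lower bound construction. -/
lemma dav_lower (m n : ℕ) (hm : 0 < m) (hn : 0 < n) :
    ∃ S : Multiset (ZMod m × ZMod (m * n)), Multiset.card S = m + m * n - 2 ∧
      ¬ ∃ T ≤ S, T ≠ 0 ∧ T.sum = 0 := by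
  classical
  haveI : NeZero m := ⟨hm.ne'⟩
  haveI : NeZero (m * n) := ⟨(Nat.mul_pos hm hn).ne'⟩
  set g1 : ZMod m × ZMod (m * n) := ((1 : ZMod m), (0 : ZMod (m * n))) with hg1
  set g2 : ZMod m × ZMod (m * n) := ((0 : ZMod m), (1 : ZMod (m * n))) with hg2
  set A := Multiset.replicate (m - 1) g1 with hA
  set B := Multiset.replicate (m * n - 1) g2 with hB
  refine ⟨A + B, ?_, ?_⟩
  · rw [Multiset.card_add, hA, hB, Multiset.card_replicate, Multiset.card_replicate]
    have h2 : 1 ≤ m * n := Nat.mul_pos hm hn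
    omega
  · rintro ⟨T, hTle, hTne, hTsum⟩
    have h2 : T - A ≤ B := by
      rw [tsub_le_iff_left]
      exact hTle
    have h1 : T - (T - A) ≤ A := tsub_tsub_le
    obtain ⟨c1, hc1le, hc1⟩ := Multiset.le_replicate_iff.mp h1
    obtain ⟨c2, hc2le, hc2⟩ := Multiset.le_replicate_iff.mp h2
    have hTsplit : (T - (T - A)) + (T - A) = T :=
      tsub_add_cancel_of_le (Multiset.sub_le_self T A)
    have hsum := congrArg Multiset.sum hTsplit
    rw [Multiset.sum_add, hc1, hc2, Multiset.sum_replicate, Multiset.sum_replicate] at hsum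
    rw [← hsum] at hTsum
    have hfst := congrArg Prod.fst hTsum
    have hsnd := congrArg Prod.snd hTsum
    simp only [Prod.smul_fst, Prod.smul_snd, Prod.fst_add, Prod.snd_add, hg1, hg2,
      smul_zero, add_zero, zero_add, Prod.fst_zero, Prod.snd_zero] at hfst hsnd
    rw [nsmul_eq_mul, mul_one] at hfst hsnd
    have hc1z : c1 = 0 := by
      have hdvd := (ZMod.natCast_eq_zero_iff c1 m).mp hfst
      exact Nat.eq_zero_of_dvd_of_lt hdvd (by omega)
    have hc2z : c2 = 0 := by
      have h2' : 1 ≤ m * n := Nat.mul_pos hm hn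
      have hdvd := (ZMod.natCast_eq_zero_iff c2 (m * n)).mp hsnd
      exact Nat.eq_zero_of_dvd_of_lt hdvd (by omega)
    apply hTne
    rw [← hTsplit, hc1, hc2, hc1z, hc2z]
    simp

/-- For `G = C_m ⊕ C_{mn}`, the Davenport constant is `D(G) = m + mn - 1`:
every sequence of length at least `m + mn - 1` has a nonempty zero-sum subsequence, and
there is a sequence of length `m + mn - 2` with none. -/
theorem stmt_9 (m n : ℕ) (hm : 0 < m) (hn : 0 < n) :
    (∀ S : Multiset (ZMod m × ZMod (m * n)), m + m * n - 1 ≤ S.card →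
      ∃ T ≤ S, T ≠ 0 ∧ T.sum = 0) ∧
    (∃ S : Multiset (ZMod m × ZMod (m * n)), S.card = m + m * n - 2 ∧
      ¬ ∃ T ≤ S, T ≠ 0 ∧ T.sum = 0) := by
  exact ⟨fun S hS => dav_upper m n hm hn S hS, dav_lower m n hm hn⟩
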